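/- Let T be a tree with root ∅ and no self-loops or parallel edges, and fix N, k ∈ ℕ. Let u_1, v_1, ..., u_k, v_k be (not necessarily distinct) vertices with dist_T(∅, u_i) ≤ dist_T(∅, v_i) ≤ dist_T(∅, u_i) + 1 for all i. Let T^{(k)} be the multigraph on the same vertex set obtained by adding the k edges {u_i, v_i}. Let B_N be the set of non-backtracking walks in T^{(k)} that start at ∅ and have length at most N, and let T_N be the set of vertices of T at distance at most N from ∅. Then |B_N| ≤ (2k+1)^N · |T_N|. -/

import Mathlib

open List

namespace Stmt6Aux

variable {V : Type*} [DecidableEq V] {k : ℕ}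

/-- non-backtracking predicate -/
def NBT (p : List V) : Prop := ∀ a b : V, [a, b, a] <:+: p → a = b

lemma NBT.of_infix {p q : List V} (h : NBT q) (hpq : p <:+: q) : NBT p :=
  fun a b hi => h a b (hi.trans hpq)

variable (T : SimpleGraph V) (u v : Fin k → V)

open Classical in
noncomputable def lab (x y : V) : Option (Fin k × Bool) :=
  if T.Adj x y then none
  else if h : ∃ i, x = u i ∧ y = v i then some (h.choose, true)
  else if h2 : ∃ i, x = v i ∧ y = u i then some (h2.choose, false)
  else none

lemma lab_of_adj {x y : V} (h : T.Adj x y) : lab T u v x y = none := by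
  simp [lab, h]

lemma lab_some_true {x y : V} {i : Fin k}
    (h : lab T u v x y = some (i, true)) : x = u i ∧ y = v i := by
  unfold lab at h
  split_ifs at h with h1 h2 h3
  · cases h
    exact h2.choose_spec
  · cases h

lemma lab_some_false {x y : V} {i : Fin k}
    (h : lab T u v x y = some (i, false)) : x = v i ∧ y = u i := by
  unfold lab at h
  split_ifs at h with h1 h2 h3
  · cases h
  · cases h
    exact h3.choose_spec

lemma lab_ne_none {x y : V} (hna : ¬ T.Adj x y)
    (h : ∃ i, (x = u i ∧ y = v i) ∨ (x = v i ∧ y = u i)) :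
    lab T u v x y ≠ none := by
  unfold lab
  rw [if_neg hna]
  obtain ⟨i, hi | hi⟩ := h
  · rw [dif_pos ⟨i, hi⟩]; simp
  · by_cases h2 : ∃ j, x = u j ∧ y = v j
    · rw [dif_pos h2]; simp
    · rw [dif_neg h2, dif_pos ⟨i, hi⟩]; simp

noncomputable def Lab : List V → List (Option (Fin k × Bool))
  | [] => []
  | [_] => []
  | a :: b :: l => lab T u v a b :: Lab (b :: l)

@[simp] lemma Lab_nil : Lab T u v ([] : List V) = [] := rfl
@[simp] lemma Lab_single (a : V) : Lab T u v [a] = [] := rfl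
@[simp] lemma Lab_cons₂ (a b : V) (l : List V) :
    Lab T u v (a :: b :: l) = lab T u v a b :: Lab T u v (b :: l) := rfl

lemma Lab_length : ∀ p : List V, (Lab T u v p).length = p.length - 1
  | [] => rfl
  | [_] => rfl
  | a :: b :: l => by
    simp only [Lab_cons₂, List.length_cons]
    rw [Lab_length (b :: l)]
    simp

lemma Lab_append : ∀ (s : List V) (x : V) (r : List V),
    Lab T u v (s ++ x :: r) = Lab T u v (s ++ [x]) ++ Lab T u v (x :: r)
  | [], x, r => by simp
  | [a], x, r => by simp
  | a :: c :: s', x, r => by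
    have ih := Lab_append (c :: s') x r
    simp only [List.cons_append, Lab_cons₂] at *
    rw [ih]

lemma Lab_all_none_of_tree : ∀ p : List V, List.Chain' T.Adj p →
    ∀ o ∈ Lab T u v p, o = none
  | [], _, o, ho => by simp at ho
  | [_], _, o, ho => by simp at ho
  | a :: b :: l, hc, o, ho => by
    unfold List.Chain' at hc; rw [List.isChain_cons_cons] at hc
    simp only [Lab_cons₂, List.mem_cons] at ho
    rcases ho with rfl | ho
    · exact lab_of_adj T u v hc.1
    · exact Lab_all_none_of_tree (b :: l) hc.2 o ho

section WithAdj'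

variable (Adj' : V → V → Prop)
variable (hAdj' : ∀ x y, Adj' x y ↔
      T.Adj x y ∨ ∃ i, (x = u i ∧ y = v i) ∨ (x = v i ∧ y = u i))

include hAdj' in
lemma tree_chain_of_all_none : ∀ p : List V, List.Chain' Adj' p →
    (∀ o ∈ Lab T u v p, o = none) → List.Chain' T.Adj p
  | [], _, _ => List.isChain_nil
  | [_], _, _ => List.isChain_singleton _
  | a :: b :: l, hc, hn => by
    unfold List.Chain' at hc ⊢; rw [List.isChain_cons_cons] at hc ⊢
    refine ⟨?_, tree_chain_of_all_none (b :: l) hc.2 fun o ho => hn o (by simp [ho])⟩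
    have h1 : lab T u v a b = none := hn _ (by simp)
    rcases (hAdj' a b).mp hc.1 with h | h
    · exact h
    · by_cases hadj : T.Adj a b
      · exact hadj
      · exact absurd h1 (lab_ne_none T u v hadj h)

include hAdj' in
lemma decomp : ∀ p : List V, List.Chain' Adj' p →
    List.Chain' T.Adj p ∨ ∃ s x y t, p = s ++ x :: y :: t ∧
      List.Chain' T.Adj (s ++ [x]) ∧ ¬ T.Adj x y ∧ Adj' x y ∧
      List.Chain' Adj' (y :: t)
  | [], _ => Or.inl List.isChain_nil
  | [_], _ => Or.inl (List.isChain_singleton _)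
  | a :: b :: l, hc => by
    unfold List.Chain' at hc; rw [List.isChain_cons_cons] at hc
    by_cases hadj : T.Adj a b
    · rcases decomp (b :: l) hc.2 with h | ⟨s, x, y, t, heq, hs, hxy, hxy', ht⟩
      · exact Or.inl (List.isChain_cons_cons.mpr ⟨hadj, h⟩)
      · refine Or.inr ⟨a :: s, x, y, t, by rw [List.cons_append, heq], ?_, hxy, hxy', ht⟩
        unfold List.Chain'; rw [List.cons_append, List.isChain_cons]
        refine ⟨fun c hc' => ?_, hs⟩
        have hh : (s ++ [x]).head? = (s ++ x :: y :: t).head? := by cases s <;> simp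
        rw [hh, ← heq] at hc'
        simp only [List.head?_cons, Option.mem_def, Option.some.injEq] at hc'
        rwa [← hc']
    · exact Or.inr ⟨[], a, b, l, rfl, List.isChain_singleton _, hadj,
        hc.1, hc.2⟩

end WithAdj'

/-! ### Walk lemmas -/

lemma exists_walk_support : ∀ (p : List V) (x z : V), List.Chain' T.Adj p →
    p.head? = some x → p.getLast? = some z → ∃ w : T.Walk x z, w.support = p
  | [], x, z, _, hh, _ => by simp at hh
  | [a], x, z, _, hh, hl => by
    simp only [List.head?_cons, Option.some.injEq] at hh
    simp only [List.getLast?_singleton, Option.some.injEq] at hl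
    subst hh; subst hl
    exact ⟨SimpleGraph.Walk.nil, rfl⟩
  | a :: b :: l, x, z, hc, hh, hl => by
    simp only [List.head?_cons, Option.some.injEq] at hh
    subst hh
    unfold List.Chain' at hc; rw [List.isChain_cons_cons] at hc
    rw [List.getLast?_cons_cons] at hl
    obtain ⟨w, hw⟩ := exists_walk_support (b :: l) b z hc.2 rfl hl
    exact ⟨SimpleGraph.Walk.cons hc.1 w, by simp [hw]⟩

lemma nbt_isPath (hT : T.IsAcyclic) : ∀ {x z : V} (w : T.Walk x z),
    NBT w.support → w.IsPath := by
  intro x z w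
  induction w with
  | nil => exact fun _ => SimpleGraph.Walk.IsPath.nil
  | @cons x b z hadj w' ih =>
    intro hnbt
    have htail : NBT w'.support :=
      hnbt.of_infix (List.suffix_cons x _).isInfix
    have hp' := ih htail
    rw [SimpleGraph.Walk.cons_isPath_iff]
    refine ⟨hp', fun hx => ?_⟩
    have hq1 : (w'.takeUntil x hx).IsPath := hp'.takeUntil hx
    have hq2 : (SimpleGraph.Walk.cons hadj.symm SimpleGraph.Walk.nil : T.Walk b x).IsPath := by
      rw [SimpleGraph.Walk.cons_isPath_iff]
      exact ⟨SimpleGraph.Walk.IsPath.nil, by simp [hadj.ne']⟩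
    have huniq := SimpleGraph.isAcyclic_iff_path_unique.mp hT
      (⟨_, hq1⟩ : T.Path b x) ⟨_, hq2⟩
    have hsup : (w'.takeUntil x hx).support = [b, x] := by
      have := congrArg (fun p : T.Path b x => p.1.support) huniq
      simpa using this
    have hspec := w'.take_spec hx
    have hws : w'.support = b :: x :: (w'.dropUntil x hx).support.tail := by
      conv_lhs => rw [← hspec]
      rw [SimpleGraph.Walk.support_append, hsup]
      rfl
    have hinf : [x, b, x] <:+: (SimpleGraph.Walk.cons hadj w').support := by
      rw [SimpleGraph.Walk.support_cons, hws]
      exact ⟨[], (w'.dropUntil x hx).support.tail, rfl⟩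
    exact hadj.ne (hnbt x b hinf)

/-- Uniqueness of non-backtracking tree walks given endpoints. -/
lemma tree_nbt_unique (hT : T.IsAcyclic) (p q : List V) {x z : V}
    (hp : List.Chain' T.Adj p) (hq : List.Chain' T.Adj q)
    (hnp : NBT p) (hnq : NBT q)
    (hhp : p.head? = some x) (hhq : q.head? = some x)
    (hlp : p.getLast? = some z) (hlq : q.getLast? = some z) : p = q := by
  obtain ⟨wp, hwp⟩ := exists_walk_support T p x z hp hhp hlp
  obtain ⟨wq, hwq⟩ := exists_walk_support T q x z hq hhq hlq
  rw [← hwp] at hnp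
  rw [← hwq] at hnq
  have hpath_p := nbt_isPath T hT wp hnp
  have hpath_q := nbt_isPath T hT wq hnq
  have := SimpleGraph.isAcyclic_iff_path_unique.mp hT
    (⟨wp, hpath_p⟩ : T.Path x z) ⟨wq, hpath_q⟩
  rw [← hwp, ← hwq]
  exact congrArg (fun r : T.Path x z => r.1.support) this

/-- splitting equal lists along the first non-`none` entry -/
lemma none_prefix_eq {β : Type*} : ∀ (L1 L2 : List (Option β)) (s1 s2 : Option β)
    (r1 r2 : List (Option β)), (∀ o ∈ L1, o = none) → (∀ o ∈ L2, o = none) →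
    s1 ≠ none → s2 ≠ none → L1 ++ s1 :: r1 = L2 ++ s2 :: r2 →
    L1 = L2 ∧ s1 = s2 ∧ r1 = r2
  | [], [], s1, s2, r1, r2, _, _, _, _, he => by
    simp only [List.nil_append, List.cons.injEq] at he
    exact ⟨rfl, he.1, he.2⟩
  | [], b :: L2, s1, s2, r1, r2, _, h2, hs1, _, he => by
    simp only [List.nil_append, List.cons_append, List.cons.injEq] at he
    exact absurd (he.1.trans (h2 b (by simp))) hs1
  | a :: L1, [], s1, s2, r1, r2, h1, _, _, hs2, he => by
    simp only [List.nil_append, List.cons_append, List.cons.injEq] at he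
    exact absurd (he.1.symm.trans (h1 a (by simp))) hs2
  | a :: L1, b :: L2, s1, s2, r1, r2, h1, h2, hs1, hs2, he => by
    simp only [List.cons_append, List.cons.injEq] at he
    obtain ⟨hL, hs, hr⟩ := none_prefix_eq L1 L2 s1 s2 r1 r2
      (fun o ho => h1 o (by simp [ho])) (fun o ho => h2 o (by simp [ho])) hs1 hs2 he.2
    exact ⟨by rw [he.1, hL], hs, hr⟩

lemma getLast?_append_cons {α : Type*} (l r : List α) (a : α) :
    (l ++ a :: r).getLast? = (a :: r).getLast? := by
  rw [List.getLast?_append, Option.or_of_isSome (by simp [List.getLast?_isSome])]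

lemma head?_append_concat {α : Type*} (s : List α) (x : α) (r : List α) :
    ((s ++ [x]) ++ r).head? = (s ++ [x]).head? := by
  cases s <;> simp

lemma main_inj (hT : T.IsAcyclic) (Adj' : V → V → Prop)
    (hAdj' : ∀ x y, Adj' x y ↔
      T.Adj x y ∨ ∃ i, (x = u i ∧ y = v i) ∨ (x = v i ∧ y = u i)) :
    ∀ (n : ℕ) (p q : List V), p.length + q.length ≤ n →
    List.Chain' Adj' p → List.Chain' Adj' q → NBT p → NBT q →
    p.head? = q.head? → p ≠ [] → p.getLast? = q.getLast? →
    (∃ a b, Lab T u v p ++ List.replicate a none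
      = Lab T u v q ++ List.replicate b none) →
    p = q := by
  intro n
  induction n with
  | zero =>
    intro p q hlen _ _ _ _ _ hpne _ _
    cases p
    · exact absurd rfl hpne
    · simp at hlen
  | succ n ih =>
    intro p q hlen hcp hcq hnp hnq hhead hpne hlast hlab
    obtain ⟨x0, hx0⟩ : ∃ x0, p.head? = some x0 := by
      cases p with
      | nil => exact absurd rfl hpne
      | cons a t => exact ⟨a, rfl⟩
    have hq0 : q.head? = some x0 := by rw [← hhead]; exact hx0
    have hqne : q ≠ [] := by intro h; rw [h] at hq0; simp at hq0
    obtain ⟨z, hz⟩ : ∃ z, p.getLast? = some z := by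
      rw [← Option.isSome_iff_exists, List.getLast?_isSome]; exact hpne
    have hzq : q.getLast? = some z := by rw [← hlast]; exact hz
    obtain ⟨a, b, he⟩ := hlab
    rcases decomp T u v Adj' hAdj' p hcp with htp |
      ⟨s, x, y, t, heqp, hs, hxy, hxy', ht⟩
    · -- p is a tree chain
      have hqn : ∀ o ∈ Lab T u v q, o = none := by
        intro o ho
        have hmem : o ∈ Lab T u v p ++ List.replicate a (none : Option (Fin k × Bool)) := by
          rw [he]; exact List.mem_append_left _ ho
        rcases List.mem_append.mp hmem with h | h
        · exact Lab_all_none_of_tree T u v p htp o h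
        · exact List.eq_of_mem_replicate h
      have hcq' := tree_chain_of_all_none T u v Adj' hAdj' q hcq hqn
      exact tree_nbt_unique T hT p q htp hcq' hnp hnq hx0 hq0 hz hzq
    · -- p has a surplus step
      have hsurp : ∃ i, (x = u i ∧ y = v i) ∨ (x = v i ∧ y = u i) := by
        rcases (hAdj' x y).mp hxy' with h | h
        · exact absurd h hxy
        · exact h
      have hxyne := lab_ne_none T u v hxy hsurp
      have hLp : Lab T u v p = Lab T u v (s ++ [x]) ++ lab T u v x y :: Lab T u v (y :: t) := by
        rw [heqp, Lab_append T u v s x (y :: t)]; rfl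
      rcases decomp T u v Adj' hAdj' q hcq with htq |
        ⟨s', x', y', t', heqq, hs', hxy2, hxy2', ht'⟩
      · -- q tree chain: contradiction
        exfalso
        have hmem : lab T u v x y ∈ Lab T u v q ++ List.replicate b (none : Option (Fin k × Bool)) := by
          rw [← he, hLp]
          exact List.mem_append_left _ (by simp)
        rcases List.mem_append.mp hmem with h | h
        · exact hxyne (Lab_all_none_of_tree T u v q htq _ h)
        · exact hxyne (List.eq_of_mem_replicate h)
      · have hsurp' : ∃ i, (x' = u i ∧ y' = v i) ∨ (x' = v i ∧ y' = u i) := by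
          rcases (hAdj' x' y').mp hxy2' with h | h
          · exact absurd h hxy2
          · exact h
        have hxyne' := lab_ne_none T u v hxy2 hsurp'
        have hLq : Lab T u v q
            = Lab T u v (s' ++ [x']) ++ lab T u v x' y' :: Lab T u v (y' :: t') := by
          rw [heqq, Lab_append T u v s' x' (y' :: t')]; rfl
        rw [hLp, hLq, List.append_assoc, List.append_assoc, List.cons_append,
          List.cons_append] at he
        obtain ⟨hseg, hlabeq, hrest⟩ := none_prefix_eq _ _ _ _ _ _
          (Lab_all_none_of_tree T u v _ hs) (Lab_all_none_of_tree T u v _ hs')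
          hxyne hxyne' he
        -- identify x, y with x', y'
        obtain ⟨⟨i, bb⟩, hib⟩ := Option.ne_none_iff_exists'.mp hxyne
        have hib' : lab T u v x' y' = some (i, bb) := by rw [← hlabeq]; exact hib
        have hxx' : x = x' ∧ y = y' := by
          cases bb
          · obtain ⟨e1, e2⟩ := lab_some_false T u v hib
            obtain ⟨e3, e4⟩ := lab_some_false T u v hib'
            exact ⟨e1.trans e3.symm, e2.trans e4.symm⟩
          · obtain ⟨e1, e2⟩ := lab_some_true T u v hib
            obtain ⟨e3, e4⟩ := lab_some_true T u v hib'
            exact ⟨e1.trans e3.symm, e2.trans e4.symm⟩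
        obtain ⟨hxx, hyy⟩ := hxx'
        subst hxx; subst hyy
        -- segments are equal
        have hseg_eq : s ++ [x] = s' ++ [x] := by
          refine tree_nbt_unique T hT (x := x0) _ _ hs hs' ?_ ?_ ?_ ?_
            (List.getLast?_concat (l := s)) (List.getLast?_concat (l := s'))
          · exact hnp.of_infix ⟨[], y :: t, by simp [heqp]⟩
          · exact hnq.of_infix ⟨[], y :: t', by simp [heqq]⟩
          · rw [← hx0, heqp, show s ++ x :: y :: t = (s ++ [x]) ++ (y :: t) by simp,
              head?_append_concat]
          · rw [← hq0, heqq, show s' ++ x :: y :: t' = (s' ++ [x]) ++ (y :: t') by simp,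
              head?_append_concat]
        have hss : s = s' := by
          have := congrArg List.dropLast hseg_eq
          rwa [List.dropLast_concat, List.dropLast_concat] at this
        -- recurse on the tails
        have htails : y :: t = y :: t' := by
          refine ih (y :: t) (y :: t') ?_ ht ht' ?_ ?_ rfl (by simp) ?_ ⟨a, b, hrest⟩
          · have l1 : p.length = s.length + (t.length + 2) := by simp [heqp]
            have l2 : q.length = s'.length + (t'.length + 2) := by simp [heqq]
            simp only [List.length_cons]
            omega
          · exact hnp.of_infix ⟨s ++ [x], [], by simp [heqp]⟩
          · exact hnq.of_infix ⟨s' ++ [x], [], by simp [heqq]⟩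
          · have e1 : p.getLast? = (y :: t).getLast? := by
              rw [heqp, getLast?_append_cons, List.getLast?_cons_cons]
            have e2 : q.getLast? = (y :: t').getLast? := by
              rw [heqq, getLast?_append_cons, List.getLast?_cons_cons]
            rw [← e1, ← e2, hlast]
        have htt : t = t' := by injection htails
        rw [heqp, heqq, hss, htt]

lemma dist_getLast_le (root : V) (Adj' : V → V → Prop)
    (step : ∀ x y, Adj' x y → T.dist root y ≤ T.dist root x + 1) :
    ∀ (p : List V) (x z : V), List.Chain' Adj' p →
    p.head? = some x → p.getLast? = some z →
    T.dist root z ≤ T.dist root x + (p.length - 1)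
  | [], x, z, _, hh, _ => by simp at hh
  | [a], x, z, _, hh, hl => by
    simp only [List.head?_cons, Option.some.injEq] at hh
    simp only [List.getLast?_singleton, Option.some.injEq] at hl
    subst hh; subst hl; simp
  | a :: b :: l, x, z, hc, hh, hl => by
    simp only [List.head?_cons, Option.some.injEq] at hh
    subst hh
    unfold List.Chain' at hc; rw [List.isChain_cons_cons] at hc
    rw [List.getLast?_cons_cons] at hl
    have h1 := dist_getLast_le root Adj' step (b :: l) b z hc.2 rfl hl
    have h2 := step a b hc.1
    simp only [List.length_cons] at h1 ⊢
    omega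

end Stmt6Aux

theorem stmt6 {V : Type*} [Fintype V] [DecidableEq V] (T : SimpleGraph V)
    (hT : T.IsTree) (root : V) (N k : ℕ)
    (u v : Fin k → V)
    (hdist : ∀ i, T.dist root (u i) ≤ T.dist root (v i) ∧
      T.dist root (v i) ≤ T.dist root (u i) + 1)
    (Adj' : V → V → Prop)
    (hAdj' : ∀ x y, Adj' x y ↔
      T.Adj x y ∨ ∃ i, (x = u i ∧ y = v i) ∨ (x = v i ∧ y = u i))
    (B : Set (List V))
    (hB : B = {p : List V | p.head? = some root ∧ p.length ≤ N + 1 ∧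
      List.Chain' Adj' p ∧
      (∀ a b : V, [a, b, a] <:+: p → a = b)}) :
    B.Finite ∧ B.ncard ≤ (2 * k + 1) ^ N * Set.ncard {w : V | T.dist root w ≤ N} := by
  classical
  subst hB
  set B : Set (List V) := {p : List V | p.head? = some root ∧ p.length ≤ N + 1 ∧
      List.Chain' Adj' p ∧ (∀ a b : V, [a, b, a] <:+: p → a = b)} with hBdef
  let enc : List V → List (Option (Fin k × Bool)) × V := fun p =>
    (Stmt6Aux.Lab T u v p ++ List.replicate (N - (p.length - 1)) none, p.getLastD root)
  set s1 : Set (List (Option (Fin k × Bool))) := {l | l.length = N} with hs1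
  set s2 : Set V := {w : V | T.dist root w ≤ N} with hs2
  have e1 : ↥s1 ≃ List.Vector (Option (Fin k × Bool)) N :=
    Equiv.subtypeEquivRight (fun l => Iff.rfl)
  have hs1fin : s1.Finite := by
    have : Finite ↥s1 := Finite.of_equiv _ e1.symm
    exact Set.toFinite s1
  have htfin : (s1 ×ˢ s2).Finite := hs1fin.prod (Set.toFinite s2)
  -- the distance step bound
  have step : ∀ x y, Adj' x y → T.dist root y ≤ T.dist root x + 1 := by
    intro x y hxy
    rcases (hAdj' x y).mp hxy with h | ⟨i, ⟨hx, hy⟩ | ⟨hx, hy⟩⟩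
    · have ht := hT.isConnected.dist_triangle (u := root) (v := x) (w := y)
      rwa [(SimpleGraph.dist_eq_one_iff_adj).mpr h] at ht
    · subst hx; subst hy; exact (hdist i).2
    · subst hx; subst hy; exact (hdist i).1.trans (Nat.le_succ _)
  -- encoding maps B into s1 ×ˢ s2
  have hmaps : ∀ p ∈ B, enc p ∈ s1 ×ˢ s2 := by
    intro p hp
    obtain ⟨hh, hlen, hchain, hnbt⟩ := hp
    have hpne : p ≠ [] := by intro h; rw [h] at hh; simp at hh
    have hplen : 1 ≤ p.length := List.length_pos_iff.mpr hpne
    constructor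
    · show (Stmt6Aux.Lab T u v p ++ _).length = N
      rw [List.length_append, List.length_replicate, Stmt6Aux.Lab_length]
      omega
    · show T.dist root (p.getLastD root) ≤ N
      obtain ⟨z, hz⟩ : ∃ z, p.getLast? = some z := by
        rw [← Option.isSome_iff_exists, List.getLast?_isSome]; exact hpne
      have hzd : p.getLastD root = z := by
        rw [List.getLastD_eq_getLast?, hz]; rfl
      rw [hzd]
      have := Stmt6Aux.dist_getLast_le T root Adj' step p root z hchain hh hz
      rw [SimpleGraph.dist_self] at this
      omega
  -- injectivity
  have hinj : Set.InjOn enc B := by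
    intro p hp q hq he
    obtain ⟨hhp, hlenp, hchainp, hnbtp⟩ := hp
    obtain ⟨hhq, hlenq, hchainq, hnbtq⟩ := hq
    have hpne : p ≠ [] := by intro h; rw [h] at hhp; simp at hhp
    have hqne : q ≠ [] := by intro h; rw [h] at hhq; simp at hhq
    obtain ⟨z, hz⟩ : ∃ z, p.getLast? = some z := by
      rw [← Option.isSome_iff_exists, List.getLast?_isSome]; exact hpne
    obtain ⟨z', hz'⟩ : ∃ z', q.getLast? = some z' := by
      rw [← Option.isSome_iff_exists, List.getLast?_isSome]; exact hqne
    have he1 := congrArg Prod.fst he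
    have he2 := congrArg Prod.snd he
    simp only [enc] at he1 he2
    have hlast : p.getLast? = q.getLast? := by
      rw [hz, hz']
      have hzd : p.getLastD root = z := by rw [List.getLastD_eq_getLast?, hz]; rfl
      have hzd' : q.getLastD root = z' := by rw [List.getLastD_eq_getLast?, hz']; rfl
      rw [← hzd, ← hzd', he2]
    exact Stmt6Aux.main_inj T u v hT.IsAcyclic Adj' hAdj' (p.length + q.length) p q
      le_rfl hchainp hchainq hnbtp hnbtq (by rw [hhp, hhq]) hpne hlast ⟨_, _, he1⟩
  have hBfin : B.Finite := by
    have himg : (enc '' B).Finite := htfin.subset (Set.image_subset_iff.mpr hmaps)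
    exact Set.Finite.of_finite_image himg hinj
  refine ⟨hBfin, ?_⟩
  have hle : B.ncard ≤ (s1 ×ˢ s2).ncard :=
    Set.ncard_le_ncard_of_injOn enc hmaps hinj htfin
  have hcardα : Fintype.card (Option (Fin k × Bool)) = 2 * k + 1 := by
    simp only [Fintype.card_option, Fintype.card_prod, Fintype.card_fin,
      Fintype.card_bool]
    omega
  have hcard : (s1 ×ˢ s2).ncard = (2 * k + 1) ^ N * s2.ncard := by
    rw [← Nat.card_coe_set_eq, Nat.card_congr (Equiv.Set.prod s1 s2),
      Nat.card_prod, Nat.card_congr e1, Nat.card_eq_fintype_card, card_vector,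
      hcardα, Nat.card_coe_set_eq]
  rw [← hcard]
  exact hle
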